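/- In the Banach space c₀ of real sequences converging to 0 (with the supremum norm), there exists a set T ⊆ c₀ which is Haar null and meager but not Haar meager. -/

import Mathlib

open MeasureTheory Set

/-- A set in a topological abelian group is *Haar meager* if there is a Borel set `B ⊇ A`,
a nonempty compact metric space `K` and a continuous `f : K → G` such that `f ⁻¹' (B + x)`
is meager in `K` for every `x ∈ G`. -/
def IsHaarMeager {G : Type*} [TopologicalSpace G] [AddCommGroup G] (A : Set G) : Prop :=
  ∃ B : Set G, A ⊆ B ∧ MeasurableSet[borel G] B ∧
    ∃ (K : Type) (_ : MetricSpace K) (_ : CompactSpace K) (_ : Nonempty K) (f : K → G),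
      Continuous f ∧ ∀ x : G, IsMeagre (f ⁻¹' ((fun b => b + x) '' B))

/-- A set in a topological abelian group is *Haar null* if there is a Borel probability
measure `μ` and a Borel set `B ⊇ A` with `μ (x + B) = 0` for every `x ∈ G`. -/
def IsHaarNull {G : Type*} [TopologicalSpace G] [AddCommGroup G] (A : Set G) : Prop :=
  ∃ μ : @Measure G (borel G), @IsProbabilityMeasure G (borel G) μ ∧
    ∃ B : Set G, A ⊆ B ∧ MeasurableSet[borel G] B ∧
      ∀ x : G, μ ((fun b => x + b) '' B) = 0

open ZeroAtInfty

namespace C0Counterexample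

open Filter

/-- Build an element of `C₀(ℕ, ℝ)` from a sequence tending to `0`. -/
noncomputable def mk0 (g : ℕ → ℝ) (h : Tendsto g atTop (nhds 0)) : C₀(ℕ, ℝ) :=
  ⟨⟨g, continuous_of_discreteTopology⟩, by
    rwa [cocompact_eq_cofinite, Nat.cofinite_eq_atTop]⟩

@[simp] lemma mk0_apply (g : ℕ → ℝ) (h) (k : ℕ) : mk0 g h k = g k := rfl

lemma tendsto_apply (y : C₀(ℕ, ℝ)) : Tendsto (fun k => y k) atTop (nhds 0) := by
  have := y.zero_at_infty'
  rwa [cocompact_eq_cofinite, Nat.cofinite_eq_atTop] at this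

lemma abs_apply_le_norm (y : C₀(ℕ, ℝ)) (k : ℕ) : |y k| ≤ ‖y‖ := by
  have h1 : ‖y.toBCF k‖ ≤ ‖y.toBCF‖ := BoundedContinuousFunction.norm_coe_le_norm y.toBCF k
  simpa using h1

lemma eventually_abs_lt (y : C₀(ℕ, ℝ)) {δ : ℝ} (hδ : 0 < δ) :
    ∀ᶠ n in atTop, |y n| < δ := by
  have := Metric.tendsto_nhds.mp (tendsto_apply y) δ hδ
  simpa [Real.dist_eq] using this

lemma continuous_apply_c0 (k : ℕ) : Continuous (fun y : C₀(ℕ, ℝ) => y k) := by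
  refine Metric.continuous_iff.2 fun y ε hε => ⟨ε, hε, fun z hz => ?_⟩
  have h2 : |z k - y k| ≤ dist z y := by
    rw [dist_eq_norm]; exact abs_apply_le_norm (z - y) k
  calc dist (z k) (y k) ≤ dist z y := by rwa [Real.dist_eq]
    _ < ε := hz

/-- The element supported at one coordinate. -/
noncomputable def single (j : ℕ) (a : ℝ) : C₀(ℕ, ℝ) :=
  mk0 (fun i => if i = j then a else 0) (by
    apply Tendsto.congr' (f₁ := fun _ => (0:ℝ))
    · filter_upwards [eventually_gt_atTop j] with i hi
      simp [Nat.ne_of_gt hi]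
    · exact tendsto_const_nhds)

lemma single_apply_self (j : ℕ) (a : ℝ) : single j a j = a := by simp [single]

lemma single_apply_ne (j i : ℕ) (a : ℝ) (h : i ≠ j) : single j a i = 0 := by simp [single, h]

lemma norm_single_le (j : ℕ) (a : ℝ) : ‖single j a‖ ≤ |a| := by
  have : ‖(single j a).toBCF‖ ≤ |a| := by
    refine (BoundedContinuousFunction.norm_le (abs_nonneg a)).2 fun i => ?_
    show ‖(single j a) i‖ ≤ |a|
    by_cases h : i = j
    · subst h; rw [single_apply_self]; exact le_of_eq (Real.norm_eq_abs a)
    · rw [single_apply_ne j i a h]; simp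
  simpa using this

section Envelope

variable {K : Type} [MetricSpace K] [CompactSpace K] [Nonempty K]

lemma bddAbove_coord (f : K → C₀(ℕ, ℝ)) (hf : Continuous f) (n : ℕ) :
    BddAbove (range fun k => |f k n|) := by
  obtain ⟨R, hR⟩ := (isCompact_range hf).isBounded.subset_closedBall 0
  refine ⟨R, ?_⟩
  rintro r ⟨k, rfl⟩
  refine le_trans (abs_apply_le_norm (f k) n) ?_
  have := hR (mem_range_self k)
  simpa [Metric.mem_closedBall, dist_zero_right] using this

lemma envelope_le (f : K → C₀(ℕ, ℝ)) (hf : Continuous f) (k : K) (n : ℕ) :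
    |f k n| ≤ ⨆ k', |f k' n| :=
  le_ciSup (bddAbove_coord f hf n) k

lemma envelope_nonneg (f : K → C₀(ℕ, ℝ)) (hf : Continuous f) (n : ℕ) :
    0 ≤ ⨆ k', |f k' n| :=
  le_trans (abs_nonneg _) (envelope_le f hf (Classical.arbitrary K) n)

lemma envelope_tendsto (f : K → C₀(ℕ, ℝ)) (hf : Continuous f) :
    Tendsto (fun n => ⨆ k', |f k' n|) atTop (nhds 0) := by
  rw [Metric.tendsto_atTop]
  intro δ hδ
  obtain ⟨t, htf, hcover⟩ := (Metric.totallyBounded_iff.mp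
    (isCompact_range hf).totallyBounded) (δ/4) (by positivity)
  have h1 : ∀ᶠ n in atTop, ∀ y ∈ t, |y n| < δ/4 :=
    (eventually_all_finite htf).2 fun y _ => eventually_abs_lt y (by positivity)
  obtain ⟨N, hN⟩ := eventually_atTop.mp h1
  refine ⟨N, fun n hn => ?_⟩
  have hsup : (⨆ k', |f k' n|) ≤ δ/2 := by
    refine ciSup_le fun k => ?_
    obtain ⟨y, hy, hky⟩ := mem_iUnion₂.mp (hcover (mem_range_self (f := f) k))
    have h2 : |f k n - y n| ≤ dist (f k) y := by
      rw [dist_eq_norm]; exact abs_apply_le_norm (f k - y) n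
    have h3 : dist (f k) y < δ/4 := Metric.mem_ball.mp hky
    have h4 : |y n| < δ/4 := hN n hn y hy
    calc |f k n| = |(f k n - y n) + y n| := by ring_nf
      _ ≤ |f k n - y n| + |y n| := abs_add_le _ _
      _ ≤ δ/4 + δ/4 := by linarith
      _ = δ/2 := by ring
  have h5 : 0 ≤ ⨆ k', |f k' n| := envelope_nonneg f hf n
  rw [Real.dist_eq, abs_of_nonneg (by linarith)]
  linarith

end Envelope

end C0Counterexample

open C0Counterexample Filter

/-- In the Banach space `c₀ = C₀(ℕ, ℝ)` of real sequences converging to `0` with the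
supremum norm, there exists a set which is Haar null and meager but not Haar meager. -/
theorem exists_haarNull_meager_not_haarMeager_c0 :
    ∃ T : Set C₀(ℕ, ℝ), IsHaarNull T ∧ IsMeagre T ∧ ¬ IsHaarMeager T := by
  classical
  set G := C₀(ℕ, ℝ)
  letI : MeasurableSpace G := borel G
  haveI : BorelSpace G := ⟨rfl⟩
  -- the set T
  refine ⟨{y : G | (∀ m, |y (2*m)| ≤ |y (2*m+1)|) ∧
      ∀ N, ∃ n, N ≤ n ∧ |y (2*n)| < (1/8 : ℝ)^n}, ?_, ?_, ?_⟩
  · -- Haar null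
    have hv : Tendsto (fun k : ℕ => (1/2:ℝ)^k) atTop (nhds 0) :=
      tendsto_pow_atTop_nhds_zero_of_lt_one (by norm_num) (by norm_num)
    set v : G := mk0 _ hv with hvdef
    have hψc : Continuous (fun θ : ℝ => θ • v) := continuous_id.smul continuous_const
    have hψ : Measurable (fun θ : ℝ => θ • v) := hψc.measurable
    set P : Measure ℝ := volume.restrict (Icc (0:ℝ) 1) with hPdef
    haveI hPprob : IsProbabilityMeasure P := ⟨by simp [hPdef, Real.volume_Icc]⟩
    set Bset : Set G := {y | ∀ N, ∃ n, N ≤ n ∧ |y (2*n)| < (1/8:ℝ)^n} with hBdef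
    have hBmeas : MeasurableSet Bset := by
      have hBeq : Bset = ⋂ N, ⋃ n, ⋃ (_ : N ≤ n), {y : G | |y (2*n)| < (1/8:ℝ)^n} := by
        ext y; simp [hBdef, Set.mem_iInter, Set.mem_iUnion]
      rw [hBeq]
      refine MeasurableSet.iInter fun N => MeasurableSet.iUnion fun n =>
        MeasurableSet.iUnion fun _ => ?_
      exact (isOpen_lt ((continuous_apply_c0 (2*n)).abs) continuous_const).measurableSet
    refine ⟨P.map (fun θ : ℝ => θ • v), Measure.isProbabilityMeasure_map hψ.aemeasurable,
      Bset, fun y hy => hy.2, hBmeas, ?_⟩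
    intro x
    have hsubm : Measurable (fun y : G => y - x) :=
      (continuous_id.sub continuous_const).measurable
    have himg : ((fun b => x + b) '' Bset) = (fun y : G => y - x) ⁻¹' Bset := by
      ext y
      constructor
      · rintro ⟨b, hb, rfl⟩; simpa using hb
      · intro hy; exact ⟨y - x, hy, by simp⟩
    rw [himg, Measure.map_apply hψ (hsubm hBmeas)]
    have key : ∀ N : ℕ, P ((fun θ : ℝ => θ • v) ⁻¹' ((fun y : G => y - x) ⁻¹' Bset))
        ≤ ENNReal.ofReal (2 * (1/2:ℝ)^N) * 2 := by
      intro N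
      have hsub2 : ((fun θ : ℝ => θ • v) ⁻¹' ((fun y : G => y - x) ⁻¹' Bset)) ⊆
          ⋃ j : ℕ, Ioo ((x (2*(N+j)) - (1/8:ℝ)^(N+j)) / (1/2:ℝ)^(2*(N+j)))
                     ((x (2*(N+j)) + (1/8:ℝ)^(N+j)) / (1/2:ℝ)^(2*(N+j))) := by
        intro θ hθ
        obtain ⟨n, hNn, hn⟩ := hθ N
        refine Set.mem_iUnion.2 ⟨n - N, ?_⟩
        have hn' : N + (n - N) = n := by omega
        rw [hn']
        have hc : (0:ℝ) < (1/2:ℝ)^(2*n) := by positivity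
        have hval : ((θ • v - x) : C₀(ℕ, ℝ)) (2*n) = θ * (1/2:ℝ)^(2*n) - x (2*n) := by
          rw [ZeroAtInftyContinuousMap.sub_apply, ZeroAtInftyContinuousMap.smul_apply]
          simp [hvdef, smul_eq_mul]
        rw [hval, abs_lt] at hn
        constructor
        · rw [div_lt_iff₀ hc]; linarith [hn.1, hn.2]
        · rw [lt_div_iff₀ hc]; linarith [hn.1, hn.2]
      have hlen : ∀ m : ℕ, volume (Ioo ((x (2*m) - (1/8:ℝ)^m) / (1/2:ℝ)^(2*m))
          ((x (2*m) + (1/8:ℝ)^m) / (1/2:ℝ)^(2*m)))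
          = ENNReal.ofReal (2 * (1/2:ℝ)^m) := by
        intro m
        have hc : ((1/2:ℝ))^(2*m) ≠ 0 := by positivity
        have h8 : (1/8:ℝ)^m = (1/2:ℝ)^m * (1/2:ℝ)^(2*m) := by
          rw [← pow_add, show (1/8:ℝ) = (1/2:ℝ)^3 by norm_num, ← pow_mul]
          congr 1
          omega
        rw [Real.volume_Ioo]
        congr 1
        rw [h8]
        field_simp
        ring
      calc P ((fun θ : ℝ => θ • v) ⁻¹' ((fun y : G => y - x) ⁻¹' Bset))
          ≤ volume (⋃ j : ℕ, Ioo ((x (2*(N+j)) - (1/8:ℝ)^(N+j)) / (1/2:ℝ)^(2*(N+j)))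
                     ((x (2*(N+j)) + (1/8:ℝ)^(N+j)) / (1/2:ℝ)^(2*(N+j)))) := by
            refine le_trans (measure_mono hsub2) ?_
            exact Measure.restrict_apply_le _ _
        _ ≤ ∑' j : ℕ, volume (Ioo ((x (2*(N+j)) - (1/8:ℝ)^(N+j)) / (1/2:ℝ)^(2*(N+j)))
                     ((x (2*(N+j)) + (1/8:ℝ)^(N+j)) / (1/2:ℝ)^(2*(N+j)))) :=
            measure_iUnion_le _
        _ = ∑' j : ℕ, ENNReal.ofReal (2 * (1/2:ℝ)^N) * ENNReal.ofReal ((1/2:ℝ)^j) := by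
            refine tsum_congr fun j => ?_
            rw [hlen (N + j), pow_add, ← ENNReal.ofReal_mul (by positivity)]
            ring_nf
        _ = ENNReal.ofReal (2 * (1/2:ℝ)^N) * ∑' j : ℕ, ENNReal.ofReal ((1/2:ℝ)^j) :=
            ENNReal.tsum_mul_left
        _ ≤ ENNReal.ofReal (2 * (1/2:ℝ)^N) * 2 := by
            gcongr
            have : ∀ j : ℕ, ENNReal.ofReal ((1/2:ℝ)^j) = (ENNReal.ofReal (1/2:ℝ))^j :=
              fun j => ENNReal.ofReal_pow (by norm_num) j
            rw [tsum_congr this, ENNReal.tsum_geometric]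
            have h12 : ENNReal.ofReal (1/2:ℝ) = 2⁻¹ := by
              rw [show (1/2:ℝ) = (2:ℝ)⁻¹ by norm_num,
                ENNReal.ofReal_inv_of_pos (by norm_num), ENNReal.ofReal_ofNat]
            rw [h12, ENNReal.one_sub_inv_two, inv_inv]
    have hlim : Tendsto (fun N : ℕ => ENNReal.ofReal (2*(1/2:ℝ)^N) * 2) atTop (nhds 0) := by
      have h0 : Tendsto (fun N : ℕ => (2*(1/2:ℝ)^N)) atTop (nhds 0) := by
        have := (tendsto_pow_atTop_nhds_zero_of_lt_one
          (by norm_num : (0:ℝ) ≤ 1/2) (by norm_num : (1/2:ℝ) < 1)).const_mul (2:ℝ)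
        simpa using this
      have h1 := ENNReal.tendsto_ofReal h0
      have h2 := ENNReal.Tendsto.mul_const (b := 2) h1 (Or.inr (by norm_num))
      simpa using h2
    exact le_antisymm (ge_of_tendsto' hlim key) (by positivity)
  · -- meager
    set S0 : Set G := {y : G | ∀ m, |y (2*m)| ≤ |y (2*m+1)|} with hS0def
    have hclosed : IsClosed S0 := by
      have hSeq : S0 = ⋂ m, {y : G | |y (2*m)| ≤ |y (2*m+1)|} := by
        ext y; simp [hS0def, Set.mem_iInter]
      rw [hSeq]
      exact isClosed_iInter fun m =>
        isClosed_le ((continuous_apply_c0 (2*m)).abs) ((continuous_apply_c0 (2*m+1)).abs)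
    have hint : interior S0 = ∅ := by
      rw [eq_empty_iff_forall_notMem]
      intro z hz
      obtain ⟨ε, hε, hball⟩ := Metric.mem_nhds_iff.mp (mem_interior_iff_mem_nhds.mp hz)
      obtain ⟨M, hM⟩ := eventually_atTop.mp (eventually_abs_lt z (show (0:ℝ) < ε/8 by linarith))
      set u := single (2*M) (ε/2) with hudef
      have hyz : dist (z + u) z < ε := by
        rw [dist_eq_norm, add_sub_cancel_left]
        calc ‖u‖ ≤ |ε/2| := norm_single_le _ _
          _ < ε := by rw [abs_of_pos (by linarith)]; linarith
      have hyS : (z + u) ∈ S0 := hball (Metric.mem_ball.mpr hyz)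
      have h1 : |(z + u) (2*M)| ≤ |(z + u) (2*M+1)| := hyS M
      have e1 : (z + u) (2*M) = z (2*M) + ε/2 := by
        rw [ZeroAtInftyContinuousMap.coe_add, Pi.add_apply, hudef, single_apply_self]
      have e2 : (z + u) (2*M+1) = z (2*M+1) := by
        rw [ZeroAtInftyContinuousMap.coe_add, Pi.add_apply, hudef,
          single_apply_ne (2*M) (2*M+1) (ε/2) (by omega)]
        ring
      rw [e1, e2] at h1
      have l1 : z (2*M) + ε/2 ≤ |z (2*M) + ε/2| := le_abs_self _
      have l2 : -(ε/8) < z (2*M) := (abs_lt.mp (hM (2*M) (by omega))).1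
      have l3 : |z (2*M+1)| < ε/8 := hM (2*M+1) (by omega)
      linarith
    have hS0meagre : IsMeagre S0 := by
      rw [IsMeagre]
      exact residual_of_dense_open hclosed.isOpen_compl
        (by rwa [← interior_eq_empty_iff_dense_compl])
    exact hS0meagre.mono (fun y hy => hy.1)
  · -- not Haar meager
    rintro ⟨B, hTB, -, K, mK, cK, nK, f, hf, hall⟩
    letI := mK
    haveI := cK
    haveI := nK
    set ε : ℕ → ℝ := fun n => ⨆ k', |f k' n| with hεdef
    have hεle : ∀ (k : K) (n : ℕ), |f k n| ≤ ε n := fun k n => envelope_le f hf k n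
    have hεnn : ∀ n, 0 ≤ ε n := fun n => envelope_nonneg f hf n
    have hεt : Tendsto ε atTop (nhds 0) := envelope_tendsto f hf
    obtain ⟨d, hd⟩ := TopologicalSpace.exists_dense_seq K
    set Δ : ℕ → ℝ := fun m => 2 * ε (2*m) + 2 * ε (2*m+1) + (1/2:ℝ)^m with hΔdef
    have hΔpos : ∀ m, 0 < Δ m := by
      intro m
      have h1 := hεnn (2*m)
      have h2 := hεnn (2*m+1)
      have h3 : (0:ℝ) < (1/2:ℝ)^m := by positivity
      simp only [hΔdef]
      linarith
    set xf : ℕ → ℝ := fun k => if Even k then f (d (Nat.unpair (k/2)).1) k else -(Δ (k/2))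
      with hxfdef
    have hxf_even : ∀ n : ℕ, xf (2*n) = f (d (Nat.unpair n).1) (2*n) := by
      intro n
      have h1 : Even (2*n) := even_two_mul n
      have h2 : 2*n/2 = n := by omega
      simp [hxfdef, h1, h2]
    have hxf_odd : ∀ n : ℕ, xf (2*n+1) = -(Δ n) := by
      intro n
      have h1 : ¬ Even (2*n+1) := by simp [Nat.even_add_one, parity_simps]
      have h2 : (2*n+1)/2 = n := by omega
      simp [hxfdef, h1, h2]
    have hεs : ∀ δ : ℝ, 0 < δ → ∃ N, ∀ n ≥ N, ε n < δ := by
      intro δ hδ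
      obtain ⟨N1, hN1⟩ := Metric.tendsto_atTop.mp hεt δ hδ
      refine ⟨N1, fun n hn => ?_⟩
      have := hN1 n hn
      rwa [Real.dist_eq, sub_zero, abs_of_nonneg (hεnn n)] at this
    have hxf0 : Tendsto xf atTop (nhds 0) := by
      rw [Metric.tendsto_atTop]
      intro δ hδ
      obtain ⟨N1, hN1⟩ := hεs (δ/8) (by linarith)
      obtain ⟨N2, hN2⟩ := Metric.tendsto_atTop.mp
        (tendsto_pow_atTop_nhds_zero_of_lt_one
          (by norm_num : (0:ℝ) ≤ 1/2) (by norm_num : (1/2:ℝ) < 1)) (δ/4) (by linarith)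
      have hN2' : ∀ m ≥ N2, (1/2:ℝ)^m < δ/4 := by
        intro m hm
        have := hN2 m hm
        rwa [Real.dist_eq, sub_zero, abs_of_nonneg (by positivity)] at this
      refine ⟨2*N1 + 2*N2 + 2, fun k hk => ?_⟩
      rw [Real.dist_eq, sub_zero]
      by_cases hev : Even k
      · have h1 : xf k = f (d (Nat.unpair (k/2)).1) k := by simp [hxfdef, hev]
        rw [h1]
        have h2 : |f (d (Nat.unpair (k/2)).1) k| ≤ ε k := hεle _ _
        have h3 : ε k < δ/8 := hN1 k (by omega)
        calc |f (d (Nat.unpair (k/2)).1) k| ≤ ε k := h2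
          _ < δ/8 := h3
          _ < δ := by linarith
      · have h1 : xf k = -(Δ (k/2)) := by simp [hxfdef, hev]
        rw [h1, abs_neg, abs_of_pos (hΔpos _)]
        have h2 : ε (2*(k/2)) < δ/8 := hN1 _ (by omega)
        have h3 : ε (2*(k/2)+1) < δ/8 := hN1 _ (by omega)
        have h4 : (1/2:ℝ)^(k/2) < δ/4 := hN2' _ (by omega)
        simp only [hΔdef]
        linarith
    set x : G := mk0 xf hxf0 with hxdef
    have hx_even : ∀ n : ℕ, x (2*n) = f (d (Nat.unpair n).1) (2*n) := fun n => hxf_even n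
    have hx_odd : ∀ n : ℕ, x (2*n+1) = -(Δ n) := fun n => hxf_odd n
    set C : ℕ → Set K := fun n => {k : K | |f k (2*n) - x (2*n)| < (1/8:ℝ)^n} with hCdef
    have hCopen : ∀ n, IsOpen (C n) :=
      fun n => isOpen_lt ((((continuous_apply_c0 (2*n)).comp hf).sub continuous_const).abs)
        continuous_const
    have hmemC : ∀ j N : ℕ, d j ∈ C (Nat.pair j N) := by
      intro j N
      have h1 : x (2*(Nat.pair j N)) = f (d j) (2*(Nat.pair j N)) := by
        rw [hx_even]
        simp [Nat.unpair_pair]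
      have h2 : (0:ℝ) < (1/8:ℝ)^(Nat.pair j N) := by positivity
      simp [hCdef, h1, h2]
    set GG : Set K := ⋂ N, ⋃ n, ⋃ (_ : N ≤ n), C n with hGdef
    have hGres : GG ∈ residual K := by
      refine (countable_iInter_mem).2 fun N => residual_of_dense_open ?_ ?_
      · exact isOpen_iUnion fun n => isOpen_iUnion fun _ => hCopen n
      · rw [dense_iff_inter_open]
        rintro U hU hUne
        obtain ⟨j, hj⟩ := hd.exists_mem_open hU hUne
        exact ⟨d j, hj, Set.mem_iUnion.2 ⟨Nat.pair j N,
          Set.mem_iUnion.2 ⟨Nat.right_le_pair j N, hmemC j N⟩⟩⟩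
    have hGsub : GG ⊆ f ⁻¹' ((fun b => b + x) '' B) := by
      intro k hk
      refine ⟨f k - x, hTB ⟨?_, ?_⟩, by simp⟩
      · intro m
        have e1 : (f k - x) (2*m) = f k (2*m) - x (2*m) :=
          ZeroAtInftyContinuousMap.sub_apply ..
        have e2 : (f k - x) (2*m+1) = f k (2*m+1) - x (2*m+1) :=
          ZeroAtInftyContinuousMap.sub_apply ..
        rw [e1, e2, hx_odd m]
        have b1 : |x (2*m)| ≤ ε (2*m) := by rw [hx_even]; exact hεle _ _
        have b2 : |f k (2*m)| ≤ ε (2*m) := hεle _ _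
        have b3 : |f k (2*m+1)| ≤ ε (2*m+1) := hεle _ _
        have b4 : (0:ℝ) < (1/2:ℝ)^m := by positivity
        have l1 : |f k (2*m) - x (2*m)| ≤ |f k (2*m)| + |x (2*m)| := abs_sub _ _
        have l2 : f k (2*m+1) - -(Δ m) ≤ |f k (2*m+1) - -(Δ m)| := le_abs_self _
        have l3 : -(ε (2*m+1)) ≤ f k (2*m+1) := neg_le_of_abs_le b3
        have b5 : 0 ≤ ε (2*m+1) := hεnn _
        simp only [hΔdef] at *
        linarith
      · intro N
        have hkN := Set.mem_iInter.1 hk N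
        obtain ⟨n, hn⟩ := Set.mem_iUnion.1 hkN
        obtain ⟨hNn, hkC⟩ := Set.mem_iUnion.1 hn
        refine ⟨n, hNn, ?_⟩
        rw [ZeroAtInftyContinuousMap.sub_apply]
        exact hkC
    have hGGm : IsMeagre GG := (hall x).mono hGsub
    have h0 : (∅ : Set K) ∈ residual K := by
      have := Filter.inter_mem hGres hGGm
      simpa [Set.inter_compl_self] using this
    have h1 : (∅ : Set K).Nonempty := (dense_of_mem_residual h0).nonempty
    simpa using h1
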